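/- For all n ≥ 2, the total number of leaves over all plane trees on n vertices equals (1/2)·binom(2n-2, n-1). -/

import Mathlib

inductive PlaneTree : Type where
  | node : List PlaneTree → PlaneTree

namespace PlaneTree

mutual
def size : PlaneTree → ℕ
  | .node ts => 1 + sizeList ts
def sizeList : List PlaneTree → ℕ
  | [] => 0
  | t :: ts => size t + sizeList ts
end

mutual
def positions : PlaneTree → List (List ℕ)
  | .node ts => [] :: positionsList 0 ts
def positionsList : ℕ → List PlaneTree → List (List ℕ)
  | _, [] => []
  | i, t :: ts => (positions t).map (i :: ·) ++ positionsList (i+1) ts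
end

mutual
def leafPositions : PlaneTree → List (List ℕ)
  | .node [] => [[]]
  | .node (t :: ts) => leafList 0 (t :: ts)
def leafList : ℕ → List PlaneTree → List (List ℕ)
  | _, [] => []
  | i, t :: ts => (leafPositions t).map (i :: ·) ++ leafList (i+1) ts
end

def isPrefixB : List ℕ → List ℕ → Bool
  | [], _ => true
  | _ :: _, [] => false
  | a :: as, b :: bs => a == b && isPrefixB as bs

def lcpLen : List ℕ → List ℕ → ℕ
  | a :: as, b :: bs => if a = b then 1 + lcpLen as bs else 0
  | _, _ => 0

/-- number of edges on the path between two vertices given by positions -/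
def pathDist (p q : List ℕ) : ℕ :=
  (p.length - lcpLen p q) + (q.length - lcpLen p q)

/-- number of vertical paths (vertex, proper descendant) in a tree -/
def verticalPairs (T : PlaneTree) : ℕ :=
  ((positions T).map (fun q =>
    ((positions T).filter (fun p => p != q && isPrefixB p q)).length)).sum

/-- total number of edges over all vertical paths in a tree -/
def verticalEdges (T : PlaneTree) : ℕ :=
  ((positions T).map (fun q =>
    (((positions T).filter (fun p => p != q && isPrefixB p q)).map
      (fun p => q.length - p.length)).sum)).sum

/-- number of (unordered) paths between distinct vertices -/
def pathCount (T : PlaneTree) : ℕ := ((positions T).sublistsLen 2).length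

/-- Wiener index: sum of distances over unordered pairs of distinct vertices -/
def wiener (T : PlaneTree) : ℕ :=
  (((positions T).sublistsLen 2).map (fun l =>
    match l with
    | [p, q] => pathDist p q
    | _ => 0)).sum
mutual
def decEq : (a b : PlaneTree) → Decidable (a = b)
  | .node as, .node bs =>
    match decEqList as bs with
    | isTrue h => isTrue (by rw [h])
    | isFalse h => isFalse (by intro hh; cases hh; exact h rfl)
def decEqList : (as bs : List PlaneTree) → Decidable (as = bs)
  | [], [] => isTrue rfl
  | [], _ :: _ => isFalse (by simp)
  | _ :: _, [] => isFalse (by simp)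
  | a :: as, b :: bs =>
    match decEq a b, decEqList as bs with
    | isTrue h1, isTrue h2 => isTrue (by rw [h1, h2])
    | isFalse h1, _ => isFalse (by intro hh; injection hh; exact h1 ‹_›)
    | _, isFalse h2 => isFalse (by intro hh; injection hh; exact h2 ‹_›)
end

instance : DecidableEq PlaneTree := decEq

def nodeEmb : List PlaneTree ↪ PlaneTree :=
  ⟨node, fun a b h => by injection h⟩

def consEmb : PlaneTree × List PlaneTree ↪ List PlaneTree :=
  ⟨fun p => p.1 :: p.2, fun a b h => by
    cases a; cases b; simp at h; simp [h.1, h.2]⟩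

@[simp] lemma nodeEmb_apply (l : List PlaneTree) : nodeEmb l = node l := rfl

@[simp] lemma consEmb_apply (p : PlaneTree × List PlaneTree) : consEmb p = p.1 :: p.2 := rfl

def listsOfSize : ℕ → Finset (List PlaneTree)
  | 0 => {[]}
  | (m+1) => (Finset.range (m+1)).attach.biUnion fun k =>
      have hk : k.1 < m + 1 := Finset.mem_range.mp k.2
      (((listsOfSize k.1).map nodeEmb) ×ˢ (listsOfSize (m - k.1))).map consEmb
  decreasing_by · exact hk
                · omega

lemma one_le_size (t : PlaneTree) : 1 ≤ t.size := by
  cases t with | node ts => simp [size]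

lemma mem_listsOfSize : ∀ m ts, ts ∈ listsOfSize m ↔ sizeList ts = m := by
  intro m
  induction m using Nat.strong_induction_on with
  | _ m ih =>
    intro ts
    match m with
    | 0 =>
      simp only [listsOfSize, Finset.mem_singleton]
      constructor
      · rintro rfl; rfl
      · intro h
        cases ts with
        | nil => rfl
        | cons t ts => exfalso; simp [sizeList] at h; have := one_le_size t; omega
    | m+1 =>
      simp only [listsOfSize, Finset.mem_biUnion, Finset.mem_attach, Finset.mem_map,
        Finset.mem_product, true_and]
      constructor
      · rintro ⟨⟨k, hk⟩, ⟨⟨u, us⟩, ⟨hu, hus⟩, rfl⟩⟩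
        simp only [Finset.mem_map] at hu
        obtain ⟨vs, hvs, rfl⟩ := hu
        have hk' : k < m + 1 := Finset.mem_range.mp hk
        rw [ih k hk' vs] at hvs
        rw [ih (m - k) (by omega) us] at hus
        simp [consEmb_apply, nodeEmb_apply, sizeList, size]
        omega
      · intro h
        cases ts with
        | nil => simp [sizeList] at h
        | cons t ts' =>
          cases t with
          | node us =>
            have hsz : 1 + sizeList us + sizeList ts' = m + 1 := by
              simpa [sizeList, size] using h
            refine ⟨⟨sizeList us, Finset.mem_range.mpr (by omega)⟩,
              ⟨(node us, ts'), ⟨?_, ?_⟩, rfl⟩⟩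
            · simp only [Finset.mem_map]
              exact ⟨us, (ih _ (by omega) us).mpr rfl, rfl⟩
            · rw [ih (m - sizeList us) (by omega)]
              show sizeList ts' = m - sizeList us
              omega

def treesOfSize : ℕ → Finset PlaneTree
  | 0 => ∅
  | (k+1) => (listsOfSize k).map nodeEmb

lemma mem_treesOfSize : ∀ n t, t ∈ treesOfSize n ↔ size t = n := by
  intro n t
  match n with
  | 0 =>
    simp only [treesOfSize, Finset.notMem_empty, false_iff]
    have := one_le_size t; omega
  | k+1 =>
    simp only [treesOfSize, Finset.mem_map]
    constructor
    · rintro ⟨ts, hts, rfl⟩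
      rw [mem_listsOfSize] at hts
      simp [nodeEmb_apply, size, hts]; omega
    · intro h
      cases t with
      | node ts =>
        refine ⟨ts, ?_, rfl⟩
        rw [mem_listsOfSize]
        simp [size] at h; omega

def numLeaves (t : PlaneTree) : ℕ := t.leafPositions.length

def numLeavesList : List PlaneTree → ℕ
  | [] => 0
  | t :: ts => numLeaves t + numLeavesList ts

lemma leafList_length (ts : List PlaneTree) : ∀ i, (leafList i ts).length = numLeavesList ts := by
  induction ts with
  | nil => intro i; simp [leafList, numLeavesList]
  | cons t ts ih => intro i; simp [leafList, numLeavesList, numLeaves, ih]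

lemma numLeaves_node_nil : numLeaves (node []) = 1 := rfl

lemma numLeaves_node (ts : List PlaneTree) (h : ts ≠ []) :
    numLeaves (node ts) = numLeavesList ts := by
  cases ts with
  | nil => exact absurd rfl h
  | cons t ts => simp [numLeaves, leafPositions, leafList_length]

lemma pieces_disjoint (m k1 k2 : ℕ) (hne : k1 ≠ k2) :
    Disjoint
      ((((listsOfSize k1).map nodeEmb) ×ˢ (listsOfSize (m - k1))).map consEmb)
      ((((listsOfSize k2).map nodeEmb) ×ˢ (listsOfSize (m - k2))).map consEmb) := by
  rw [Finset.disjoint_left]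
  rintro x hx1 hx2
  simp only [Finset.mem_map, Finset.mem_product] at hx1 hx2
  obtain ⟨⟨u, us⟩, ⟨hu, _⟩, rfl⟩ := hx1
  obtain ⟨⟨v, vs⟩, ⟨hv, _⟩, heq⟩ := hx2
  simp only [Finset.mem_map] at hu hv
  obtain ⟨as, has, rfl⟩ := hu
  obtain ⟨bs, hbs, rfl⟩ := hv
  rw [mem_listsOfSize] at has hbs
  simp [consEmb, nodeEmb] at heq
  apply hne
  rw [← has, ← hbs, heq.1]

lemma sum_listsOfSize_succ {M : Type*} [AddCommMonoid M] (f : List PlaneTree → M) (m : ℕ) :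
    ∑ ts ∈ listsOfSize (m+1), f ts
      = ∑ k ∈ Finset.range (m+1), ∑ vs ∈ listsOfSize k,
          ∑ us ∈ listsOfSize (m-k), f (node vs :: us) := by
  rw [show listsOfSize (m+1) = (Finset.range (m+1)).attach.biUnion fun k =>
      (((listsOfSize k.1).map nodeEmb) ×ˢ (listsOfSize (m - k.1))).map consEmb by
    rw [listsOfSize]]
  rw [Finset.sum_biUnion (by
    intro a _ b _ hab
    exact pieces_disjoint m a.1 b.1 (fun h => hab (Subtype.ext h)))]
  rw [← Finset.sum_attach (Finset.range (m+1)) (fun k => ∑ vs ∈ listsOfSize k,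
          ∑ us ∈ listsOfSize (m-k), f (node vs :: us))]
  refine Finset.sum_congr rfl fun k _ => ?_
  rw [Finset.sum_map, Finset.sum_product, Finset.sum_map]
  rfl

def Cc (m : ℕ) : ℕ := (listsOfSize m).card

def S (m : ℕ) : ℕ := ∑ ts ∈ listsOfSize m, numLeavesList ts

lemma Cc_zero : Cc 0 = 1 := by rw [Cc, listsOfSize]; rfl

lemma S_zero : S 0 = 0 := by rw [S, listsOfSize]; simp [numLeavesList]

lemma Cc_succ (m : ℕ) : Cc (m+1) = ∑ k ∈ Finset.range (m+1), Cc k * Cc (m-k) := by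
  rw [Cc, Finset.card_eq_sum_ones, sum_listsOfSize_succ (fun _ => (1 : ℕ)) m]
  refine Finset.sum_congr rfl fun k _ => ?_
  simp [Finset.sum_const, Cc]

lemma Cc_eq_catalan : ∀ m, Cc m = catalan m := by
  intro m
  induction m using Nat.strong_induction_on with
  | _ m ih =>
    match m with
    | 0 => simp [Cc_zero]
    | m+1 =>
      rw [Cc_succ, catalan_succ, ← Finset.sum_range fun i => catalan i * catalan (m - i)]
      refine Finset.sum_congr rfl fun k hk => ?_
      have hk' := Finset.mem_range.mp hk
      rw [ih k (by omega), ih (m-k) (by omega)]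

lemma sum_numLeaves_node (k : ℕ) :
    ∑ vs ∈ listsOfSize k, numLeaves (node vs) = S k + if k = 0 then 1 else 0 := by
  match k with
  | 0 => rw [listsOfSize]; simp [numLeaves_node_nil, S_zero]
  | k+1 =>
    simp only [Nat.succ_ne_zero, if_false, add_zero, S]
    refine Finset.sum_congr rfl fun vs hvs => ?_
    rw [mem_listsOfSize] at hvs
    apply numLeaves_node
    intro h; subst h; simp [sizeList] at hvs

lemma S_succ (m : ℕ) :
    S (m+1) = Cc m + 2 * ∑ k ∈ Finset.range (m+1), S k * Cc (m-k) := by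
  rw [S, sum_listsOfSize_succ (fun ts => numLeavesList ts) m]
  have step : ∀ k ∈ Finset.range (m+1),
      (∑ vs ∈ listsOfSize k, ∑ us ∈ listsOfSize (m-k), numLeavesList (node vs :: us))
      = (S k + if k = 0 then 1 else 0) * Cc (m-k) + Cc k * S (m-k) := by
    intro k _
    calc ∑ vs ∈ listsOfSize k, ∑ us ∈ listsOfSize (m-k), numLeavesList (node vs :: us)
        = ∑ vs ∈ listsOfSize k, (Cc (m-k) * numLeaves (node vs) + S (m-k)) := by
          refine Finset.sum_congr rfl fun vs _ => ?_
          simp only [numLeavesList]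
          rw [Finset.sum_add_distrib, Finset.sum_const, smul_eq_mul]
          rfl
      _ = Cc (m-k) * (∑ vs ∈ listsOfSize k, numLeaves (node vs)) + Cc k * S (m-k) := by
          rw [Finset.sum_add_distrib, Finset.sum_const, ← Finset.mul_sum, smul_eq_mul]
          rfl
      _ = (S k + if k = 0 then 1 else 0) * Cc (m-k) + Cc k * S (m-k) := by
          rw [sum_numLeaves_node]; ring
  rw [Finset.sum_congr rfl step, Finset.sum_add_distrib]
  have h2 : ∑ k ∈ Finset.range (m+1), Cc k * S (m-k)
      = ∑ k ∈ Finset.range (m+1), S k * Cc (m-k) := by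
    rw [← Finset.sum_range_reflect]
    refine Finset.sum_congr rfl fun k hk => ?_
    have hk' := Finset.mem_range.mp hk
    have h3 : m + 1 - 1 - k = m - k := by omega
    have h4 : m - (m - k) = k := by omega
    rw [h3, h4, mul_comm]
  have h1 : ∑ k ∈ Finset.range (m+1), (S k + if k = 0 then 1 else 0) * Cc (m-k)
      = (∑ k ∈ Finset.range (m+1), S k * Cc (m-k)) + Cc m := by
    have : ∀ k ∈ Finset.range (m+1), (S k + if k = 0 then 1 else 0) * Cc (m-k)
        = S k * Cc (m-k) + (if k = 0 then Cc (m-k) else 0) := by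
      intro k _; split <;> ring
    rw [Finset.sum_congr rfl this, Finset.sum_add_distrib]
    congr 1
    rw [Finset.sum_ite_eq' (Finset.range (m+1)) 0 (fun k => Cc (m-k))]
    simp
  rw [h1, h2]; ring

lemma two_S_succ : ∀ m, 2 * S (m+1) = Nat.centralBinom (m+1) := by
  intro m
  induction m using Nat.strong_induction_on with
  | _ m ih =>
    have key : ∑ k ∈ Finset.range (m+1), (2 * ((k+1) * (catalan k * catalan (m-k))))
        = Nat.centralBinom (m+1) := by
      have hs : ∑ k ∈ Finset.range (m+1), ((m-k+1) * (catalan k * catalan (m-k)))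
          = ∑ k ∈ Finset.range (m+1), ((k+1) * (catalan k * catalan (m-k))) := by
        rw [← Finset.sum_range_reflect]
        refine Finset.sum_congr rfl fun k hk => ?_
        have hk' := Finset.mem_range.mp hk
        have h3 : m + 1 - 1 - k = m - k := by omega
        have h4 : m - (m - k) = k := by omega
        rw [h3, h4]; ring
      have htwo : ∑ k ∈ Finset.range (m+1), (2 * ((k+1) * (catalan k * catalan (m-k))))
          = ∑ k ∈ Finset.range (m+1), ((m+2) * (catalan k * catalan (m-k))) := by
        rw [show (2 : ℕ) = 1 + 1 by rfl]
        calc ∑ k ∈ Finset.range (m+1), ((1+1) * ((k+1) * (catalan k * catalan (m-k))))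
            = ∑ k ∈ Finset.range (m+1), ((k+1) * (catalan k * catalan (m-k))
                + (k+1) * (catalan k * catalan (m-k))) := by
              refine Finset.sum_congr rfl fun k _ => ?_; ring
          _ = ∑ k ∈ Finset.range (m+1), ((k+1) * (catalan k * catalan (m-k)))
                + ∑ k ∈ Finset.range (m+1), ((m-k+1) * (catalan k * catalan (m-k))) := by
              rw [Finset.sum_add_distrib, hs]
          _ = ∑ k ∈ Finset.range (m+1), ((k+1) * (catalan k * catalan (m-k))
                + (m-k+1) * (catalan k * catalan (m-k))) := by
              rw [Finset.sum_add_distrib]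
          _ = ∑ k ∈ Finset.range (m+1), ((m+2) * (catalan k * catalan (m-k))) := by
              refine Finset.sum_congr rfl fun k hk => ?_
              have hk' := Finset.mem_range.mp hk
              have : (k+1) + (m-k+1) = m + 2 := by omega
              rw [← add_mul, this]
      rw [htwo, ← Finset.mul_sum]
      rw [show ∑ k ∈ Finset.range (m+1), catalan k * catalan (m-k) = catalan (m+1) by
        rw [catalan_succ, ← Finset.sum_range fun i => catalan i * catalan (m - i)]]
      exact succ_mul_catalan_eq_centralBinom (m+1)
    rw [← key, S_succ, Cc_eq_catalan]
    have hC : ∀ k, Cc k = catalan k := Cc_eq_catalan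
    rw [Nat.mul_add]
    rw [show (2 : ℕ) * (2 * ∑ k ∈ Finset.range (m+1), S k * Cc (m-k))
        = ∑ k ∈ Finset.range (m+1), (4 * (S k * catalan (m-k))) by
      rw [Finset.mul_sum, Finset.mul_sum]
      refine Finset.sum_congr rfl fun k _ => ?_
      rw [hC]; ring]
    rw [Finset.sum_range_succ' (fun k => 2 * ((k+1) * (catalan k * catalan (m-k)))) m,
        Finset.sum_range_succ' (fun k => 4 * (S k * catalan (m-k))) m]
    rw [S_zero]
    simp only [catalan_zero, Nat.sub_zero, mul_zero, zero_mul, mul_one, add_zero, zero_add, one_mul]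
    rw [add_comm (2 * catalan m)]
    congr 1
    refine Finset.sum_congr rfl fun i hi => ?_
    have hi' := Finset.mem_range.mp hi
    have h4 : 4 * (S (i+1) * catalan (m - (i+1))) = 2 * (2 * S (i+1)) * catalan (m - (i+1)) := by
      ring
    rw [h4, ih i hi', Nat.centralBinom]
    rw [show (2 * (i+1)).choose (i+1) = Nat.centralBinom (i+1) from rfl,
        ← succ_mul_catalan_eq_centralBinom (i+1)]
    ring
end PlaneTree

open PlaneTree

theorem total_leaves_plane_trees (n : ℕ) (hn : 2 ≤ n) :
    (∑ᶠ T : {T : PlaneTree // T.size = n}, ((T.1.leafPositions).length : ℚ))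
      = (1 / 2) * ((2 * n - 2).choose (n - 1)) := by
  obtain ⟨m, rfl⟩ : ∃ m, n = m + 2 := ⟨n - 2, by omega⟩
  haveI : Fintype {T : PlaneTree // T.size = m + 2} :=
    Fintype.subtype (treesOfSize (m+2)) (fun t => mem_treesOfSize (m+2) t)
  rw [finsum_eq_sum_of_fintype]
  rw [← Finset.sum_subtype (treesOfSize (m+2))
    (fun t => mem_treesOfSize (m+2) t) (fun T => ((T.leafPositions).length : ℚ))]
  have h1 : ∑ T ∈ treesOfSize (m+2), ((T.leafPositions).length : ℚ)
      = ((∑ T ∈ treesOfSize (m+2), numLeaves T : ℕ) : ℚ) := by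
    push_cast; rfl
  rw [h1]
  have h2 : ∑ T ∈ treesOfSize (m+2), numLeaves T = S (m+1) := by
    rw [show treesOfSize (m+2) = (listsOfSize (m+1)).map nodeEmb from rfl, Finset.sum_map]
    have h := sum_numLeaves_node (m+1)
    simpa [nodeEmb_apply] using h
  rw [h2]
  have h3 : 2 * (m+2) - 2 = 2 * (m+1) := by omega
  have h4 : m + 2 - 1 = m + 1 := by omega
  rw [h3, h4]
  have hq := congrArg (fun x : ℕ => (x : ℚ)) (two_S_succ m)
  rw [Nat.centralBinom] at hq
  push_cast at hq
  linarith
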